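/- For all integers m ≥ 3 and n ≥ 1, the cylindrical graph C_m □ P_n admits an efficient dominating set if and only if either n = 1 and m ≡ 0 (mod 3), or n = 2 and m ≡ 0 (mod 4). -/

import Mathlib

open SimpleGraph Finset
open scoped Classical

/-- Closed neighborhood of a vertex. -/
def closedNbr {V : Type*} (G : SimpleGraph V) (v : V) : Set V :=
  insert v (G.neighborSet v)

/-- `S` is an efficient dominating set: every vertex lies in the closed
neighborhood of exactly one vertex of `S`. -/
def IsEffDomSet {V : Type*} (G : SimpleGraph V) (S : Set V) : Prop :=
  ∀ v : V, ∃! u, u ∈ S ∧ v ∈ closedNbr G u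

/-- `S` is a dominating set. -/
def IsDomSet {V : Type*} (G : SimpleGraph V) (S : Set V) : Prop :=
  ∀ v : V, v ∉ S → ∃ u ∈ S, G.Adj u v

/-- The domination number. -/
noncomputable def domNumber {V : Type*} (G : SimpleGraph V) [Fintype V] : ℕ :=
  sInf {n | ∃ S : Set V, IsDomSet G S ∧ S.ncard = n}

/-- `f` is a `[k]`-Roman dominating function on `G`. -/
noncomputable def IsKRDF {V : Type*} (G : SimpleGraph V) [Fintype V] (k : ℕ) (f : V → ℕ) : Prop :=
  (∀ v, f v ≤ k + 1) ∧
  ∀ v : V, f v < k →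
    f v + ∑ u ∈ univ.filter (fun u => G.Adj v u), f u ≥
      k + (univ.filter (fun u => G.Adj v u ∧ 0 < f u)).card

/-- The `[k]`-Roman domination number. -/
noncomputable def kRoman {V : Type*} (G : SimpleGraph V) [Fintype V] (k : ℕ) : ℕ :=
  sInf {w | ∃ f : V → ℕ, IsKRDF G k f ∧ ∑ v, f v = w}

/-- `S` is a packing: closed neighborhoods of vertices in `S` are pairwise disjoint. -/
def IsPacking {V : Type*} (G : SimpleGraph V) (S : Set V) : Prop :=
  S.Pairwise fun u v => Disjoint (closedNbr G u) (closedNbr G v)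

/-- The packing number. -/
noncomputable def packingNumber {V : Type*} (G : SimpleGraph V) [Fintype V] : ℕ :=
  sSup {n | ∃ S : Set V, IsPacking G S ∧ S.ncard = n}

namespace EDS5

open Fin.CommRing Fin.NatCast

lemma mem_closedNbr {V : Type*} (G : SimpleGraph V) (u v : V) :
    v ∈ closedNbr G u ↔ v = u ∨ G.Adj u v := by
  simp [closedNbr, Set.mem_insert_iff, SimpleGraph.mem_neighborSet]

lemma mem_self {V : Type*} (G : SimpleGraph V) (v : V) : v ∈ closedNbr G v :=
  Set.mem_insert _ _

lemma mem_of_adj {V : Type*} {G : SimpleGraph V} {u v : V} (h : G.Adj u v) :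
    v ∈ closedNbr G u := Set.mem_insert_of_mem _ h

variable {m n : ℕ} [NeZero m]

lemma val_one'' (hm : 2 ≤ m) : (1 : Fin m).val = 1 := by
  rw [Fin.val_one' m]; exact Nat.mod_eq_of_lt (by omega)

lemma cyc_adj (hm : 2 ≤ m) {a b : Fin m} :
    (cycleGraph m).Adj a b ↔ a = b + 1 ∨ b = a + 1 := by
  rw [SimpleGraph.cycleGraph_adj']
  have h1 : ∀ x : Fin m, x.val = 1 ↔ x = 1 := by
    intro x; rw [Fin.ext_iff, val_one'' hm]
  rw [h1, h1, sub_eq_iff_eq_add, sub_eq_iff_eq_add, add_comm (1:Fin m) b, add_comm (1:Fin m) a]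

/-- The cylinder graph. -/
abbrev G (m n : ℕ) : SimpleGraph (Fin m × Fin n) := (cycleGraph m).boxProd (pathGraph n)

lemma G_adj (hm : 2 ≤ m) {a i : Fin m} {b j : Fin n} :
    (G m n).Adj (a, b) (i, j) ↔
      ((a = i + 1 ∨ i = a + 1) ∧ b = j) ∨ ((b.val + 1 = j.val ∨ j.val + 1 = b.val) ∧ a = i) := by
  rw [SimpleGraph.boxProd_adj]
  simp only [cyc_adj hm, SimpleGraph.pathGraph_adj]

/-- Enumeration of possible coverers. -/
lemma coverer_shape (hm : 2 ≤ m) {a i : Fin m} {b j : Fin n}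
    (h : (i, j) ∈ closedNbr (G m n) (a, b)) :
    (a = i ∧ b = j) ∨ ((a = i + 1 ∨ i = a + 1) ∧ b = j) ∨
      ((b.val + 1 = j.val ∨ j.val + 1 = b.val) ∧ a = i) := by
  rw [mem_closedNbr, G_adj hm, Prod.ext_iff] at h
  tauto

lemma memC (hm : 2 ≤ m) {a i : Fin m} (j : Fin n) (h : a = i + 1 ∨ i = a + 1) :
    (i, j) ∈ closedNbr (G m n) (a, j) :=
  mem_of_adj (by rw [G_adj hm]; exact Or.inl ⟨h, rfl⟩)

lemma memV (hm : 2 ≤ m) (i : Fin m) {b j : Fin n} (h : b.val + 1 = j.val ∨ j.val + 1 = b.val) :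
    (i, j) ∈ closedNbr (G m n) (i, b) :=
  mem_of_adj (by rw [G_adj hm]; exact Or.inr ⟨h, rfl⟩)

section chase

variable {S : Set (Fin m × Fin n)}

/-- Two coverers of the same vertex coincide. -/
lemma uniq (hS : IsEffDomSet (G m n) S) {u w v : Fin m × Fin n}
    (hu : u ∈ S) (hw : w ∈ S) (mu : v ∈ closedNbr (G m n) u) (mw : v ∈ closedNbr (G m n) w) :
    u = w := (hS v).unique ⟨hu, mu⟩ ⟨hw, mw⟩

/-- Exclusion principle. -/
lemma excl (hS : IsEffDomSet (G m n) S) {u w v : Fin m × Fin n}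
    (hw : w ∈ S) (mu : v ∈ closedNbr (G m n) u) (mw : v ∈ closedNbr (G m n) w)
    (hne : u ≠ w) : u ∉ S := fun hu => hne (uniq hS hu hw mu mw)

end chase

-- Fin arithmetic facts
lemma val_two (hm : 3 ≤ m) : (2 : Fin m).val = 2 := by
  have h2 : (2 : Fin m) = 1 + 1 := by norm_num
  rw [h2, Fin.val_add, val_one'' (by omega)]
  exact Nat.mod_eq_of_lt (by omega)

lemma add_one_ne (hm : 3 ≤ m) (i : Fin m) : i + 1 ≠ i := by
  intro h
  have := add_eq_left.mp h
  rw [Fin.ext_iff, val_one'' (by omega : 2 ≤ m)] at this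
  simp at this

lemma add_two_ne (hm : 3 ≤ m) (i : Fin m) : i + 2 ≠ i := by
  intro h
  have := add_eq_left.mp h
  rw [Fin.ext_iff, val_two hm] at this
  simp at this

lemma natCast_eq_mod (x : ℕ) : ((x : ℕ) : Fin m) = ((x % m : ℕ) : Fin m) := by
  conv_lhs => rw [← Nat.div_add_mod x m]
  push_cast
  rw [Fin.natCast_self]
  ring


set_option linter.unusedSectionVars false
set_option maxHeartbeats 1000000

section chase2

variable {S : Set (Fin m × Fin n)}

lemma pne_row {x y : Fin m} {j k : Fin n} (h : j.val ≠ k.val) : (x, j) ≠ (y, k) := by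
  simp only [ne_eq, Prod.mk.injEq, not_and]
  intro _ hjk
  exact h (congrArg Fin.val hjk)

lemma pne_col {x y : Fin m} (j : Fin n) (h : x ≠ y) : (x, j) ≠ (y, j) := by
  simp only [ne_eq, Prod.mk.injEq, not_and]
  intro hxy
  exact absurd hxy h

lemma add_succ_ne_add (hm : 3 ≤ m) (i : Fin m) : i + 2 ≠ i + 1 := by
  intro h
  have := add_left_cancel (a := i) (b := (2:Fin m)) (c := 1) h
  rw [Fin.ext_iff, val_two hm, val_one'' (by omega)] at this
  omega

lemma exists_row0 (hm : 3 ≤ m) (hn : 2 ≤ n) (hS : IsEffDomSet (G m n) S) :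
    ∃ i : Fin m, (i, (⟨0, by omega⟩ : Fin n)) ∈ S := by
  set r0 : Fin n := ⟨0, by omega⟩ with hr0
  set r1 : Fin n := ⟨1, by omega⟩ with hr1
  have hm2 : 2 ≤ m := by omega
  obtain ⟨⟨a, b⟩, ⟨haS, hmem⟩, -⟩ := hS (0, r0)
  rcases coverer_shape hm2 hmem with ⟨ha, hb⟩ | ⟨ha, hb⟩ | ⟨hvert, ha⟩
  · exact ⟨a, by rwa [hb] at haS⟩
  · exact ⟨a, by rwa [hb] at haS⟩
  · -- vertical: b = r1, a = 0
    have hb : b = r1 := by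
      rcases hvert with h | h
      · simp [hr0] at h
      · apply Fin.ext; simpa [hr0, hr1] using h.symm
    subst ha; rw [hb] at haS
    -- (0, r1) ∈ S; now cover (1, r0)
    obtain ⟨⟨a', b'⟩, ⟨haS', hmem'⟩, -⟩ := hS (1, r0)
    rcases coverer_shape hm2 hmem' with ⟨ha', hb'⟩ | ⟨ha', hb'⟩ | ⟨hvert', ha'⟩
    · exact ⟨a', by rwa [hb'] at haS'⟩
    · exact ⟨a', by rwa [hb'] at haS'⟩
    · exfalso
      have hb' : b' = r1 := by
        rcases hvert' with h | h
        · simp [hr0] at h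
        · apply Fin.ext; simpa [hr0, hr1] using h.symm
      subst ha'; rw [hb'] at haS'
      -- (1, r1) ∈ S and (0, r1) ∈ S both cover (0, r1)
      refine excl hS haS (memC hm2 r1 (Or.inl (zero_add 1).symm)) (mem_self _ _) ?_ haS'
      exact pne_col r1 (by intro h; rw [Fin.ext_iff, val_one'' hm2] at h; simp at h)

/-- Basic exclusions around a code vertex in row 0, for `n ≥ 2`. -/
lemma basic (hm : 3 ≤ m) (hn : 2 ≤ n) (hS : IsEffDomSet (G m n) S) {i : Fin m}
    (hi : (i, (⟨0, by omega⟩ : Fin n)) ∈ S) :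
    (i + 1, (⟨0, by omega⟩ : Fin n)) ∉ S ∧ (i + 2, (⟨0, by omega⟩ : Fin n)) ∉ S ∧
    (i, (⟨1, by omega⟩ : Fin n)) ∉ S ∧ (i + 1, (⟨1, by omega⟩ : Fin n)) ∉ S ∧
    (i - 1, (⟨1, by omega⟩ : Fin n)) ∉ S := by
  set r0 : Fin n := ⟨0, by omega⟩
  set r1 : Fin n := ⟨1, by omega⟩
  have hm2 : 2 ≤ m := by omega
  have hv01 : (r0 : Fin n).val + 1 = r1.val ∨ (r1 : Fin n).val + 1 = r0.val := Or.inl rfl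
  have hv10 : (r1 : Fin n).val + 1 = r0.val ∨ (r0 : Fin n).val + 1 = r1.val := Or.inr rfl
  refine ⟨?_, ?_, ?_, ?_, ?_⟩
  · -- (i+1, r0): covers (i, r0), also covered by itself
    exact excl hS hi (memC hm2 r0 (Or.inl rfl)) (mem_self _ _) (pne_col r0 (add_one_ne hm i))
  · -- (i+2, r0): covers (i+1, r0), which (i, r0) covers
    exact excl hS hi (memC hm2 r0 (Or.inl (by ring))) (memC hm2 r0 (Or.inr rfl))
      (pne_col r0 (add_two_ne hm i))
  · -- (i, r1): covers (i, r0)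
    exact excl hS hi (memV hm2 i hv10) (mem_self _ _) (pne_row (by simp))
  · -- (i+1, r1): covers (i+1, r0), which (i, r0) covers
    exact excl hS hi (memV hm2 (i+1) hv10) (memC hm2 r0 (Or.inr rfl)) (pne_row (by simp))
  · -- (i-1, r1): covers (i-1, r0), which (i, r0) covers
    exact excl hS hi (memV hm2 (i-1) hv10) (memC hm2 r0 (Or.inl (by ring)))
      (pne_row (by simp))

end chase2

section chase3
variable {S : Set (Fin m × Fin n)}

/-- Main chase step for `n ≥ 3`. -/
lemma key3 (hm : 3 ≤ m) (hn : 3 ≤ n) (hS : IsEffDomSet (G m n) S) {i : Fin m}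
    (hi : (i, (⟨0, by omega⟩ : Fin n)) ∈ S) :
    (i + 2, (⟨1, by omega⟩ : Fin n)) ∈ S ∧ (i + 4, (⟨0, by omega⟩ : Fin n)) ∈ S := by
  set r0 : Fin n := ⟨0, by omega⟩ with hr0def
  set r1 : Fin n := ⟨1, by omega⟩ with hr1def
  set r2 : Fin n := ⟨2, by omega⟩ with hr2def
  have hm2 : 2 ≤ m := by omega
  have hv10 : (r1 : Fin n).val + 1 = r0.val ∨ (r0 : Fin n).val + 1 = r1.val := Or.inr rfl
  have hv21 : (r2 : Fin n).val + 1 = r1.val ∨ (r1 : Fin n).val + 1 = r2.val := Or.inr rfl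
  obtain ⟨hA, hB, hC, hD, hE⟩ := basic hm (by omega) hS hi
  -- coverage of (i+2, r0)
  obtain ⟨⟨a, b⟩, ⟨haS, hmem⟩, -⟩ := hS (i + 2, r0)
  rcases coverer_shape hm2 hmem with ⟨ha, hb⟩ | ⟨ha, hb⟩ | ⟨hvert, ha⟩
  · exact absurd (by rw [ha, hb] at haS; exact haS) hB
  · rcases ha with ha | ha
    · -- 3-gap case: (i+3, r0) ∈ S; derive contradiction
      exfalso
      subst hb
      rw [ha] at haS
      -- haS : (i+2+1, r0) ∈ S
      have hX : (i + 2, r1) ∉ S :=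
        excl hS haS (memV hm2 (i+2) hv10) (memC hm2 r0 (Or.inl rfl)) (pne_row (by simp))
      -- (i+1, r2) ∈ S  via coverage of (i+1, r1)
      have h21 : (i + 1, r2) ∈ S := by
        obtain ⟨⟨a', b'⟩, ⟨haS', hmem'⟩, -⟩ := hS (i + 1, r1)
        rcases coverer_shape hm2 hmem' with ⟨ha', hb'⟩ | ⟨ha', hb'⟩ | ⟨hvert', ha'⟩
        · exact absurd (by rw [ha', hb'] at haS'; exact haS') hD
        · exfalso
          rcases ha' with ha' | ha'
          · exact hX (by rwa [hb', ha', show i + 1 + 1 = i + 2 by ring] at haS')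
          · have : a' = i := by
              have : a' + 1 = i + 1 := ha'.symm
              exact add_right_cancel this
            exact hC (by rwa [hb', this] at haS')
        · subst ha'
          rcases hvert' with h | h
          · -- b'.val + 1 = 1, so b' = r0
            have hb' : b' = r0 := Fin.ext (by simpa [hr1def, hr0def] using h)
            exact absurd (by rwa [hb'] at haS') hA
          · have hb' : b' = r2 := Fin.ext (by simpa [hr1def, hr2def] using h.symm)
            rwa [hb'] at haS'
      -- (i+2, r2) ∈ S  via coverage of (i+2, r1)
      have h22 : (i + 2, r2) ∈ S := by
        obtain ⟨⟨a', b'⟩, ⟨haS', hmem'⟩, -⟩ := hS (i + 2, r1)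
        rcases coverer_shape hm2 hmem' with ⟨ha', hb'⟩ | ⟨ha', hb'⟩ | ⟨hvert', ha'⟩
        · exact absurd (by rw [ha', hb'] at haS'; exact haS') hX
        · exfalso
          rcases ha' with ha' | ha'
          · -- (i+3, r1) ∈ S, but it covers (i+3, r0) ∈ S
            have : (i + 2 + 1, r1) ∉ S :=
              excl hS haS (memV hm2 (i+2+1) hv10) (mem_self _ _) (pne_row (by simp))
            exact this (by rwa [hb', ha'] at haS')
          · have : a' = i + 1 := add_right_cancel (a := a') (b := (1:Fin m)) (c := i + 1)
              (by rw [← ha']; ring)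
            exact hD (by rwa [hb', this] at haS')
        · subst ha'
          rcases hvert' with h | h
          · have hb' : b' = r0 := Fin.ext (by simpa [hr1def, hr0def] using h)
            exact absurd (by rwa [hb'] at haS') hB
          · have hb' : b' = r2 := Fin.ext (by simpa [hr1def, hr2def] using h.symm)
            rwa [hb'] at haS'
      -- contradiction: (i+1, r2) and (i+2, r2) both cover (i+2, r2)
      have := uniq hS h21 h22 (memC hm2 r2 (Or.inr (by ring))) (mem_self _ _)
      exact add_succ_ne_add hm i ((Prod.mk.injEq _ _ _ _ ▸ this).1).symm
    · -- a = i+1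
      exfalso
      have : a = i + 1 := add_right_cancel (a := a) (b := (1:Fin m)) (c := i + 1)
        (by rw [← ha]; ring)
      exact hA (by rwa [hb, this] at haS)
  · -- vertical: b = r1, a = i+2 : this is the 4-gap case
    subst ha
    have hb : b = r1 := by
      rcases hvert with h | h
      · simp [hr0def] at h
      · exact Fin.ext (by simpa [hr0def, hr1def] using h.symm)
    rw [hb] at haS
    refine ⟨haS, ?_⟩
    -- (i+3, r0) excluded: covers (i+2,r0) which (i+2,r1) covers
    have hY : (i + 3, r0) ∉ S :=
      excl hS haS (memC hm2 r0 (Or.inl (by ring))) (memV hm2 (i+2) hv10) (pne_row (by simp))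
    have hZ : (i + 3, r1) ∉ S :=
      excl hS haS (memC hm2 r1 (Or.inl (by ring))) (mem_self _ _)
        (pne_col r1 (by
          intro h
          exact add_one_ne hm (i+2) (by rw [show i+2+1 = i+3 by ring, h])))
    -- coverage of (i+3, r0)
    obtain ⟨⟨a', b'⟩, ⟨haS', hmem'⟩, -⟩ := hS (i + 3, r0)
    rcases coverer_shape hm2 hmem' with ⟨ha', hb'⟩ | ⟨ha', hb'⟩ | ⟨hvert', ha'⟩
    · exact absurd (by rw [ha', hb'] at haS'; exact haS') hY
    · rcases ha' with ha' | ha'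
      · rwa [hb', ha', show i + 3 + 1 = i + 4 by ring] at haS'
      · exfalso
        have : a' = i + 2 := add_right_cancel (a := a') (b := (1:Fin m)) (c := i + 2)
          (by rw [← ha']; ring)
        exact hB (by rwa [hb', this] at haS')
    · exfalso
      subst ha'
      rcases hvert' with h | h
      · simp [hr0def] at h
      · have hb' : b' = r1 := Fin.ext (by simpa [hr0def, hr1def] using h.symm)
        exact hZ (by rwa [hb'] at haS')

end chase3

section finish3
variable {S : Set (Fin m × Fin n)}

lemma cast_neg_four (hm : 3 ≤ m) : ((4 * (m - 1) : ℕ) : Fin m) = -4 := by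
  have h4 : ((4 * (m - 1) : ℕ) : Fin m) + 4 = 0 := by
    have h1 : ((4 * (m - 1) : ℕ) : Fin m) + 4 = ((4 * (m - 1) + 4 : ℕ) : Fin m) := by
      push_cast; ring
    rw [h1, show (4 * (m - 1) + 4 : ℕ) = 4 * m by omega]
    push_cast [Fin.natCast_self]
    ring
  linear_combination h4

/-- No efficient dominating set when `n ≥ 3`. -/
lemma no_three (hm : 3 ≤ m) (hn : 3 ≤ n) (hS : IsEffDomSet (G m n) S) : False := by
  set r0 : Fin n := ⟨0, by omega⟩ with hr0def
  set r1 : Fin n := ⟨1, by omega⟩ with hr1def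
  set r2 : Fin n := ⟨2, by omega⟩ with hr2def
  have hm2 : 2 ≤ m := by omega
  have hv10 : (r1 : Fin n).val + 1 = r0.val ∨ (r0 : Fin n).val + 1 = r1.val := Or.inr rfl
  have hv21 : (r2 : Fin n).val + 1 = r1.val ∨ (r1 : Fin n).val + 1 = r2.val := Or.inr rfl
  obtain ⟨i0, hi0⟩ := exists_row0 hm (by omega) hS
  have orbit : ∀ k : ℕ, (i0 + ((4 * k : ℕ) : Fin m), r0) ∈ S := by
    intro k
    induction k with
    | zero => simpa using hi0
    | succ k ih =>
      have h2 := (key3 hm hn hS ih).2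
      have : i0 + ((4 * (k + 1) : ℕ) : Fin m) = i0 + ((4 * k : ℕ) : Fin m) + 4 := by
        push_cast; ring
      rw [this]
      exact h2
  have hminus : (i0 - 4, r0) ∈ S := by
    have h := orbit (m - 1)
    rwa [cast_neg_four hm, ← sub_eq_add_neg] at h
  have h_m2 : (i0 - 2, r1) ∈ S := by
    have h := (key3 hm hn hS hminus).1
    rwa [show i0 - 4 + 2 = i0 - 2 by ring] at h
  have h_p2 : (i0 + 2, r1) ∈ S := (key3 hm hn hS hi0).1
  obtain ⟨hA, hB, hC, hD, hE⟩ := basic hm (by omega) hS hi0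
  -- kill moves for row-2 candidates
  have k0 : (i0, r2) ∉ S :=
    excl hS hi0 (memV hm2 i0 (b := r2) (j := r1) (Or.inr rfl))
      (memV hm2 i0 (b := r0) (j := r1) (Or.inl rfl)) (pne_row (by simp))
  have k1 : (i0 + 1, r2) ∉ S :=
    excl hS h_p2 (memV hm2 (i0+1) (b := r2) (j := r1) (Or.inr rfl))
      (memC hm2 r1 (a := i0+2) (i := i0+1) (Or.inl (by ring))) (pne_row (by simp [hr2def, hr1def]))
  have k2 : (i0 - 1, r2) ∉ S :=
    excl hS h_m2 (memV hm2 (i0-1) (b := r2) (j := r1) (Or.inr rfl))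
      (memC hm2 r1 (a := i0-2) (i := i0-1) (Or.inr (by ring))) (pne_row (by simp [hr2def, hr1def]))
  have k3 : (i0 + 2, r2) ∉ S :=
    excl hS h_p2 (memV hm2 (i0+2) (b := r2) (j := r1) (Or.inr rfl)) (mem_self _ _)
      (pne_row (by simp [hr2def, hr1def]))
  -- coverage of (i0, r2)
  obtain ⟨⟨a, b⟩, ⟨haS, hmem⟩, -⟩ := hS (i0, r2)
  have h03 : ∃ r3 : Fin n, r3.val = 3 ∧ (i0, r3) ∈ S := by
    rcases coverer_shape hm2 hmem with ⟨ha, hb⟩ | ⟨ha, hb⟩ | ⟨hvert, ha⟩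
    · exact absurd (by rw [ha, hb] at haS; exact haS) k0
    · exfalso
      rcases ha with ha | ha
      · exact k1 (by rw [ha, hb] at haS; rwa [show i0 + 1 = i0 + 1 by rfl] at haS)
      · have : a = i0 - 1 := by rw [ha]; ring
        exact k2 (by rw [this, hb] at haS; exact haS)
    · subst ha
      rcases hvert with h | h
      · -- b.val + 1 = 2  ⇒ b = r1
        have hb : b = r1 := Fin.ext (by simpa [hr2def, hr1def] using h)
        exact absurd (by rw [hb] at haS; exact haS) hC
      · -- b.val = 3
        exact ⟨b, by simpa [hr2def] using h.symm, haS⟩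
  obtain ⟨r3, hr3, h03⟩ := h03
  -- coverage of (i0+1, r2)
  obtain ⟨⟨a', b'⟩, ⟨haS', hmem'⟩, -⟩ := hS (i0 + 1, r2)
  have h13 : (i0 + 1, r3) ∈ S := by
    rcases coverer_shape hm2 hmem' with ⟨ha', hb'⟩ | ⟨ha', hb'⟩ | ⟨hvert', ha'⟩
    · exact absurd (by rw [ha', hb'] at haS'; exact haS') k1
    · exfalso
      rcases ha' with ha' | ha'
      · have : a' = i0 + 2 := by rw [ha']; ring
        exact k3 (by rw [this, hb'] at haS'; exact haS')
      · have : a' = i0 := add_right_cancel (a := a') (b := (1:Fin m)) (c := i0) ha'.symm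
        exact k0 (by rw [this, hb'] at haS'; exact haS')
    · subst ha'
      rcases hvert' with h | h
      · have hb' : b' = r1 := Fin.ext (by simpa [hr2def, hr1def] using h)
        exact absurd (by rw [hb'] at haS'; exact haS') hD
      · have hb' : b' = r3 := Fin.ext (by rw [hr3]; simpa [hr2def] using h.symm)
        rwa [hb'] at haS'
  have := uniq hS h03 h13 (memC hm2 r3 (Or.inr rfl)) (mem_self _ _)
  exact add_one_ne hm i0 ((Prod.mk.injEq _ _ _ _ ▸ this).1.symm)

end finish3

section forward12
variable {S : Set (Fin m × Fin n)}

lemma natCast_mod_eq (x : ℕ) (h : x % m = 1) : ((x : ℕ) : Fin m) = 1 := by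
  rw [natCast_eq_mod, h, Nat.cast_one]

lemma natCast_mod_eq_two (x : ℕ) (h : x % m = 2) : ((x : ℕ) : Fin m) = 2 := by
  rw [natCast_eq_mod, h, Nat.cast_ofNat]

/-- Forward direction for `n = 1`. -/
lemma forward1 {S : Set (Fin m × Fin 1)} (hm : 3 ≤ m) (hS : IsEffDomSet (G m 1) S) :
    m % 3 = 0 := by
  have hm2 : 2 ≤ m := by omega
  have novert : ∀ b j : Fin 1, ¬(b.val + 1 = j.val ∨ j.val + 1 = b.val) := by
    intro b j h
    have hb := b.isLt; have hj := j.isLt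
    omega
  -- every coverer is in the unique row
  have key1 : ∀ i : Fin m, (i, (0 : Fin 1)) ∈ S →
      (i + 1, (0 : Fin 1)) ∉ S ∧ (i + 2, (0 : Fin 1)) ∉ S ∧ (i + 3, (0 : Fin 1)) ∈ S := by
    intro i hi
    have hA : (i + 1, (0 : Fin 1)) ∉ S :=
      excl hS hi (memC hm2 0 (Or.inl rfl)) (mem_self _ _) (pne_col _ (add_one_ne hm i))
    have hB : (i + 2, (0 : Fin 1)) ∉ S :=
      excl hS hi (memC hm2 0 (a := i+2) (i := i+1) (Or.inl (by ring)))
        (memC hm2 0 (Or.inr rfl)) (pne_col _ (add_two_ne hm i))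
    refine ⟨hA, hB, ?_⟩
    obtain ⟨⟨a, b⟩, ⟨haS, hmem⟩, -⟩ := hS (i + 2, (0 : Fin 1))
    have hb : b = 0 := Subsingleton.elim _ _
    rcases coverer_shape hm2 hmem with ⟨ha, hb'⟩ | ⟨ha, hb'⟩ | ⟨hvert, ha⟩
    · exact absurd (by rw [ha, hb] at haS; exact haS) hB
    · rcases ha with ha | ha
      · rwa [ha, hb, show i + 2 + 1 = i + 3 by ring] at haS
      · exfalso
        have : a = i + 1 := add_right_cancel (a := a) (b := (1:Fin m)) (c := i + 1)
          (by rw [← ha]; ring)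
        exact hA (by rw [this, hb] at haS; exact haS)
    · exact absurd hvert (novert _ _)
  -- there is a code vertex
  obtain ⟨⟨a, b⟩, ⟨haS, hmem⟩, -⟩ := hS ((0 : Fin m), (0 : Fin 1))
  have hb : b = 0 := Subsingleton.elim _ _
  rw [hb] at haS
  set i0 := a with hi0def
  have orbit : ∀ k : ℕ, (i0 + ((3 * k : ℕ) : Fin m), (0 : Fin 1)) ∈ S := by
    intro k
    induction k with
    | zero => simpa using haS
    | succ k ih =>
      have h2 := (key1 _ ih).2.2
      have : i0 + ((3 * (k + 1) : ℕ) : Fin m) = i0 + ((3 * k : ℕ) : Fin m) + 3 := by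
        push_cast; ring
      rw [this]
      exact h2
  by_contra h3
  have hcop : Nat.Coprime 3 m :=
    (Nat.Prime.coprime_iff_not_dvd Nat.prime_three).mpr
      (fun hdvd => h3 (Nat.dvd_iff_mod_eq_zero.mp hdvd))
  obtain ⟨k, -, hk⟩ := Nat.exists_mul_mod_eq_one_of_coprime hcop (by omega)
  have hmem1 := orbit k
  rw [natCast_mod_eq _ hk] at hmem1
  exact (key1 i0 haS).1 hmem1

end forward12

section forward2
/-- Forward direction for `n = 2`. -/
lemma forward2 {S : Set (Fin m × Fin 2)} (hm : 3 ≤ m) (hS : IsEffDomSet (G m 2) S) :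
    m % 4 = 0 := by
  have hm2 : 2 ≤ m := by omega
  set r0 : Fin 2 := ⟨0, by omega⟩ with hr0def
  set r1 : Fin 2 := ⟨1, by omega⟩ with hr1def
  have key2 : ∀ i : Fin m, (i, r0) ∈ S →
      (i + 1, r0) ∉ S ∧ (i + 2, r0) ∉ S ∧ (i + 4, r0) ∈ S := by
    intro i hi
    obtain ⟨hA, hB, hC, hD, hE⟩ := basic hm (le_refl 2) hS hi
    refine ⟨hA, hB, ?_⟩
    obtain ⟨⟨a, b⟩, ⟨haS, hmem⟩, -⟩ := hS (i + 2, r0)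
    rcases coverer_shape hm2 hmem with ⟨ha, hb⟩ | ⟨ha, hb⟩ | ⟨hvert, ha⟩
    · exact absurd (by rw [ha, hb] at haS; exact haS) hB
    · rcases ha with ha | ha
      · -- 3-gap: (i+3, r0) ∈ S, contradiction via (i+1, r1)
        exfalso
        rw [ha, hb] at haS
        have hX : (i + 2, r1) ∉ S :=
          excl hS haS (memV hm2 (i+2) (b := r1) (j := r0) (Or.inr rfl))
            (memC hm2 r0 (Or.inl rfl)) (pne_row (by simp))
        obtain ⟨⟨a', b'⟩, ⟨haS', hmem'⟩, -⟩ := hS (i + 1, r1)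
        rcases coverer_shape hm2 hmem' with ⟨ha', hb'⟩ | ⟨ha', hb'⟩ | ⟨hvert', ha'⟩
        · exact absurd (by rw [ha', hb'] at haS'; exact haS') hD
        · rcases ha' with ha' | ha'
          · exact hX (by rw [ha', hb', show i + 1 + 1 = i + 2 by ring] at haS'; exact haS')
          · have : a' = i := add_right_cancel (a := a') (b := (1:Fin m)) (c := i) ha'.symm
            exact hC (by rw [this, hb'] at haS'; exact haS')
        · subst ha'
          rcases hvert' with h | h
          · have hb' : b' = r0 := Fin.ext (by simpa [hr1def, hr0def] using h)
            exact hA (by rw [hb'] at haS'; exact haS')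
          · have := b'.isLt
            simp [hr1def] at h
            omega
      · exfalso
        have : a = i + 1 := add_right_cancel (a := a) (b := (1:Fin m)) (c := i + 1)
          (by rw [← ha]; ring)
        exact hA (by rw [this, hb] at haS; exact haS)
    · -- vertical: b = r1, a = i + 2
      subst ha
      have hb : b = r1 := by
        rcases hvert with h | h
        · simp [hr0def] at h
        · exact Fin.ext (by simpa [hr0def, hr1def] using h.symm)
      rw [hb] at haS
      have hY : (i + 3, r0) ∉ S :=
        excl hS haS (memC hm2 r0 (a := i+3) (i := i+2) (Or.inl (by ring)))
          (memV hm2 (i+2) (b := r1) (j := r0) (Or.inr rfl)) (pne_row (by simp))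
      have hZ : (i + 3, r1) ∉ S :=
        excl hS haS (memC hm2 r1 (a := i+3) (i := i+2) (Or.inl (by ring))) (mem_self _ _)
          (pne_col r1 (by
            intro h
            exact add_one_ne hm (i+2) (by rw [show i+2+1 = i+3 by ring, h])))
      obtain ⟨⟨a', b'⟩, ⟨haS', hmem'⟩, -⟩ := hS (i + 3, r0)
      rcases coverer_shape hm2 hmem' with ⟨ha', hb'⟩ | ⟨ha', hb'⟩ | ⟨hvert', ha'⟩
      · exact absurd (by rw [ha', hb'] at haS'; exact haS') hY
      · rcases ha' with ha' | ha'
        · rwa [ha', hb', show i + 3 + 1 = i + 4 by ring] at haS'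
        · exfalso
          have : a' = i + 2 := add_right_cancel (a := a') (b := (1:Fin m)) (c := i + 2)
            (by rw [← ha']; ring)
          exact hB (by rw [this, hb'] at haS'; exact haS')
      · exfalso
        subst ha'
        rcases hvert' with h | h
        · simp [hr0def] at h
        · have hb' : b' = r1 := Fin.ext (by simpa [hr0def, hr1def] using h.symm)
          exact hZ (by rw [hb'] at haS'; exact haS')
  obtain ⟨i0, hi0⟩ := exists_row0 hm (le_refl 2) hS
  have orbit : ∀ k : ℕ, (i0 + ((4 * k : ℕ) : Fin m), r0) ∈ S := by
    intro k
    induction k with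
    | zero => simpa [hr0def] using hi0
    | succ k ih =>
      have h2 := (key2 _ ih).2.2
      have : i0 + ((4 * (k + 1) : ℕ) : Fin m) = i0 + ((4 * k : ℕ) : Fin m) + 4 := by
        push_cast; ring
      rw [this]
      exact h2
  by_contra h4
  rcases Nat.even_or_odd m with hev | hodd
  · -- m even, m % 4 = 2
    obtain ⟨m', hm'⟩ := hev
    have hm'2 : m = 2 * m' := by omega
    have hm'odd : ¬ 2 ∣ m' := by
      intro ⟨t, ht⟩
      exact h4 (by omega)
    have hcop : Nat.Coprime 2 m' := (Nat.Prime.coprime_iff_not_dvd Nat.prime_two).mpr hm'odd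
    obtain ⟨k, -, hk⟩ := Nat.exists_mul_mod_eq_one_of_coprime hcop (by omega)
    -- 2 * k % m' = 1, hence 4 * k % m = 2
    have hq : 2 * k = m' * (2 * k / m') + 1 := by
      have := Nat.div_add_mod (2 * k) m'
      omega
    have h42 : 4 * k % m = 2 := by
      have h1 : 4 * k = 2 + (2 * k / m') * m := by
        rw [hm'2]
        calc 4 * k = 2 * (2 * k) := by ring
        _ = 2 * (m' * (2 * k / m') + 1) := by rw [← hq]
        _ = 2 + (2 * k / m') * (2 * m') := by ring
      rw [h1, Nat.add_mul_mod_self_right]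
      exact Nat.mod_eq_of_lt (by omega)
    have hmem2 := orbit k
    rw [natCast_mod_eq_two _ h42] at hmem2
    exact (key2 i0 hi0).2.1 hmem2
  · -- m odd
    have hcop2 : Nat.Coprime 2 m := (Nat.Prime.coprime_iff_not_dvd Nat.prime_two).mpr
      (by intro ⟨t, ht⟩; rcases hodd with ⟨s, hs⟩; omega)
    have hcop : Nat.Coprime 4 m := by
      have : (4 : ℕ) = 2 ^ 2 := by norm_num
      rw [this]
      exact Nat.Coprime.pow_left 2 hcop2
    obtain ⟨k, -, hk⟩ := Nat.exists_mul_mod_eq_one_of_coprime hcop (by omega)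
    have hmem1 := orbit k
    rw [natCast_mod_eq _ hk] at hmem1
    exact (key2 i0 hi0).1 hmem1

end forward2

section constructions

lemma L_mod (hm : 2 ≤ m) {d : ℕ} (hd : d ∣ m) (i : Fin m) :
    (i + 1).val % d = (i.val + 1) % d := by
  rw [Fin.val_add, val_one'' hm, Nat.mod_mod_of_dvd _ hd]

lemma construct1 (hm : 3 ≤ m) (h3 : m % 3 = 0) :
    IsEffDomSet (G m 1) {p : Fin m × Fin 1 | p.1.val % 3 = 0} := by
  have hm2 : 2 ≤ m := by omega
  have hd : 3 ∣ m := Nat.dvd_of_mod_eq_zero h3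
  have L1 : ∀ i : Fin m, (i + 1).val % 3 = (i.val + 1) % 3 := fun i => L_mod hm2 hd i
  rintro ⟨i, j⟩
  have hj : j = 0 := Subsingleton.elim _ _
  subst hj
  have hi3 : i.val % 3 < 3 := Nat.mod_lt _ (by omega)
  have huniq : ∀ a : Fin m, ∀ b : Fin 1, ((a, b) ∈ {p : Fin m × Fin 1 | p.1.val % 3 = 0} ∧
      (i, (0:Fin 1)) ∈ closedNbr (G m 1) (a, b)) →
      (a.val % 3 = 0 ∧ (a = i ∨ a = i + 1 ∨ i = a + 1)) := by
    rintro a b ⟨haS, hmem⟩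
    refine ⟨haS, ?_⟩
    rcases coverer_shape hm2 hmem with ⟨ha, _⟩ | ⟨ha, _⟩ | ⟨hvert, _⟩
    · exact Or.inl ha
    · exact Or.inr ha
    · exfalso
      have hb := b.isLt
      have h0 : ((0:Fin 1)).val = 0 := rfl
      omega
  rcases (show i.val % 3 = 0 ∨ i.val % 3 = 1 ∨ i.val % 3 = 2 by omega) with h0 | h0 | h0
  · refine ⟨(i, 0), ⟨h0, mem_self _ _⟩, ?_⟩
    rintro ⟨a, b⟩ hab
    obtain ⟨haS, ha⟩ := huniq a b hab
    have hb : b = 0 := Subsingleton.elim _ _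
    subst hb
    rcases ha with ha | ha | ha
    · rw [ha]
    · exfalso; rw [ha, L1 i] at haS; omega
    · exfalso
      have h2 := L1 a
      rw [← ha] at h2
      have := Nat.mod_lt a.val (show 0 < 3 by omega)
      omega
  · have hmem0 : (i - 1).val % 3 = 0 := by
      have h2 := L1 (i - 1)
      rw [show i - 1 + 1 = i by ring] at h2
      have := Nat.mod_lt (i-1).val (show 0 < 3 by omega)
      omega
    refine ⟨(i - 1, 0), ⟨hmem0, memC hm2 0 (Or.inr (by ring))⟩, ?_⟩
    rintro ⟨a, b⟩ hab
    obtain ⟨haS, ha⟩ := huniq a b hab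
    have hb : b = 0 := Subsingleton.elim _ _
    subst hb
    rcases ha with ha | ha | ha
    · exfalso; rw [ha] at haS; omega
    · exfalso; rw [ha, L1 i] at haS; omega
    · have : a = i - 1 := by rw [ha]; ring
      rw [this]
  · have hmem0 : (i + 1).val % 3 = 0 := by rw [L1 i]; omega
    refine ⟨(i + 1, 0), ⟨hmem0, memC hm2 0 (Or.inl rfl)⟩, ?_⟩
    rintro ⟨a, b⟩ hab
    obtain ⟨haS, ha⟩ := huniq a b hab
    have hb : b = 0 := Subsingleton.elim _ _
    subst hb
    rcases ha with ha | ha | ha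
    · exfalso; rw [ha] at haS; omega
    · rw [ha]
    · exfalso
      have h2 := L1 a
      rw [← ha] at h2
      have := Nat.mod_lt a.val (show 0 < 3 by omega)
      omega

end constructions

section construction2

lemma construct2 (hm : 3 ≤ m) (h4 : m % 4 = 0) :
    IsEffDomSet (G m 2)
      {p : Fin m × Fin 2 | (p.2.val = 0 ∧ p.1.val % 4 = 0) ∨ (p.2.val = 1 ∧ p.1.val % 4 = 2)} := by
  have hm2 : 2 ≤ m := by omega
  have hd : 4 ∣ m := Nat.dvd_of_mod_eq_zero h4
  have L4 : ∀ i : Fin m, (i + 1).val % 4 = (i.val + 1) % 4 := fun i => L_mod hm2 hd i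
  set SS : Set (Fin m × Fin 2) :=
    {p : Fin m × Fin 2 | (p.2.val = 0 ∧ p.1.val % 4 = 0) ∨ (p.2.val = 1 ∧ p.1.val % 4 = 2)}
    with hSSdef
  set r0 : Fin 2 := ⟨0, by omega⟩ with hr0def
  set r1 : Fin 2 := ⟨1, by omega⟩ with hr1def
  have haS0 : ∀ {a : Fin m}, (a, r0) ∈ SS → a.val % 4 = 0 := by
    rintro a (⟨_, h⟩ | ⟨hb, _⟩)
    · exact h
    · simp [hr0def] at hb
  have haS1 : ∀ {a : Fin m}, (a, r1) ∈ SS → a.val % 4 = 2 := by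
    rintro a (⟨hb, _⟩ | ⟨_, h⟩)
    · simp [hr1def] at hb
    · exact h
  have rel2 : ∀ {a i : Fin m}, a = i + 1 → a.val % 4 = (i.val + 1) % 4 := by
    intro a i h; rw [h, L4]
  have rel3 : ∀ {a i : Fin m}, i = a + 1 → i.val % 4 = (a.val + 1) % 4 := by
    intro a i h; rw [h]; exact L4 a
  have hsub : ∀ i : Fin m, (i - 1).val % 4 = (i.val + 3) % 4 := by
    intro i
    have h2 := L4 (i - 1)
    rw [show i - 1 + 1 = i by ring] at h2
    omega
  rintro ⟨i, j⟩
  have hj2 : j = r0 ∨ j = r1 := by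
    rcases (show j.val = 0 ∨ j.val = 1 by have := j.isLt; omega) with h | h
    · exact Or.inl (Fin.ext (by simpa [hr0def] using h))
    · exact Or.inr (Fin.ext (by simpa [hr1def] using h))
  -- classify coverers
  have shape0 : ∀ {a : Fin m} {b : Fin 2}, (i, r0) ∈ closedNbr (G m 2) (a, b) →
      (b = r0 ∧ (a = i ∨ a = i + 1 ∨ i = a + 1)) ∨ (b = r1 ∧ a = i) := by
    intro a b hmem
    rcases coverer_shape hm2 hmem with ⟨ha, hb⟩ | ⟨ha, hb⟩ | ⟨hvert, ha⟩
    · exact Or.inl ⟨hb, Or.inl ha⟩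
    · exact Or.inl ⟨hb, Or.inr ha⟩
    · refine Or.inr ⟨?_, ha⟩
      rcases hvert with h | h
      · simp [hr0def] at h
      · exact Fin.ext (by simpa [hr0def, hr1def] using h.symm)
  have shape1 : ∀ {a : Fin m} {b : Fin 2}, (i, r1) ∈ closedNbr (G m 2) (a, b) →
      (b = r1 ∧ (a = i ∨ a = i + 1 ∨ i = a + 1)) ∨ (b = r0 ∧ a = i) := by
    intro a b hmem
    rcases coverer_shape hm2 hmem with ⟨ha, hb⟩ | ⟨ha, hb⟩ | ⟨hvert, ha⟩
    · exact Or.inl ⟨hb, Or.inl ha⟩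
    · exact Or.inl ⟨hb, Or.inr ha⟩
    · rcases hvert with h | h
      · exact Or.inr ⟨Fin.ext (by simpa [hr0def, hr1def] using h), ha⟩
      · exfalso
        have := b.isLt
        simp [hr1def] at h
        omega
  rcases hj2 with hj | hj <;> subst hj
  · -- row 0
    rcases (show i.val % 4 = 0 ∨ i.val % 4 = 1 ∨ i.val % 4 = 2 ∨ i.val % 4 = 3 by omega)
      with h0 | h0 | h0 | h0
    · refine ⟨(i, r0), ⟨Or.inl ⟨rfl, h0⟩, mem_self _ _⟩, ?_⟩
      rintro ⟨a, b⟩ ⟨haS, hmem⟩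
      rcases shape0 hmem with ⟨hb, ha | ha | ha⟩ | ⟨hb, ha⟩
      · rw [hb, ha]
      · exfalso; subst hb; have := haS0 haS; have := rel2 ha; omega
      · exfalso; subst hb; have := haS0 haS; have := rel3 ha; omega
      · exfalso; subst hb; have := haS1 haS; subst ha; omega
    · have hmm : (i - 1).val % 4 = 0 := by have := hsub i; omega
      refine ⟨(i - 1, r0), ⟨Or.inl ⟨rfl, hmm⟩, memC hm2 r0 (Or.inr (by ring))⟩, ?_⟩
      rintro ⟨a, b⟩ ⟨haS, hmem⟩
      rcases shape0 hmem with ⟨hb, ha | ha | ha⟩ | ⟨hb, ha⟩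
      · exfalso; subst hb; have := haS0 haS; subst ha; omega
      · exfalso; subst hb; have := haS0 haS; have := rel2 ha; omega
      · rw [hb, show a = i - 1 by rw [ha]; ring]
      · exfalso; subst hb; have := haS1 haS; subst ha; omega
    · refine ⟨(i, r1), ⟨Or.inr ⟨rfl, h0⟩, memV hm2 i (b := r1) (j := r0) (Or.inr rfl)⟩, ?_⟩
      rintro ⟨a, b⟩ ⟨haS, hmem⟩
      rcases shape0 hmem with ⟨hb, ha | ha | ha⟩ | ⟨hb, ha⟩
      · exfalso; subst hb; have := haS0 haS; subst ha; omega
      · exfalso; subst hb; have := haS0 haS; have := rel2 ha; omega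
      · exfalso; subst hb; have := haS0 haS; have := rel3 ha; omega
      · rw [hb, ha]
    · have hpp : (i + 1).val % 4 = 0 := by rw [L4]; omega
      refine ⟨(i + 1, r0), ⟨Or.inl ⟨rfl, hpp⟩, memC hm2 r0 (Or.inl rfl)⟩, ?_⟩
      rintro ⟨a, b⟩ ⟨haS, hmem⟩
      rcases shape0 hmem with ⟨hb, ha | ha | ha⟩ | ⟨hb, ha⟩
      · exfalso; subst hb; have := haS0 haS; subst ha; omega
      · rw [hb, ha]
      · exfalso; subst hb; have := haS0 haS; have := rel3 ha; omega
      · exfalso; subst hb; have := haS1 haS; subst ha; omega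
  · -- row 1
    rcases (show i.val % 4 = 0 ∨ i.val % 4 = 1 ∨ i.val % 4 = 2 ∨ i.val % 4 = 3 by omega)
      with h0 | h0 | h0 | h0
    · refine ⟨(i, r0), ⟨Or.inl ⟨rfl, h0⟩, memV hm2 i (b := r0) (j := r1) (Or.inl rfl)⟩, ?_⟩
      rintro ⟨a, b⟩ ⟨haS, hmem⟩
      rcases shape1 hmem with ⟨hb, ha | ha | ha⟩ | ⟨hb, ha⟩
      · exfalso; subst hb; have := haS1 haS; subst ha; omega
      · exfalso; subst hb; have := haS1 haS; have := rel2 ha; omega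
      · exfalso; subst hb; have := haS1 haS; have := rel3 ha; omega
      · rw [hb, ha]
    · have hpp : (i + 1).val % 4 = 2 := by rw [L4]; omega
      refine ⟨(i + 1, r1), ⟨Or.inr ⟨rfl, hpp⟩, memC hm2 r1 (Or.inl rfl)⟩, ?_⟩
      rintro ⟨a, b⟩ ⟨haS, hmem⟩
      rcases shape1 hmem with ⟨hb, ha | ha | ha⟩ | ⟨hb, ha⟩
      · exfalso; subst hb; have := haS1 haS; subst ha; omega
      · rw [hb, ha]
      · exfalso; subst hb; have := haS1 haS; have := rel3 ha; omega
      · exfalso; subst hb; have := haS0 haS; subst ha; omega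
    · refine ⟨(i, r1), ⟨Or.inr ⟨rfl, h0⟩, mem_self _ _⟩, ?_⟩
      rintro ⟨a, b⟩ ⟨haS, hmem⟩
      rcases shape1 hmem with ⟨hb, ha | ha | ha⟩ | ⟨hb, ha⟩
      · rw [hb, ha]
      · exfalso; subst hb; have := haS1 haS; have := rel2 ha; omega
      · exfalso; subst hb; have := haS1 haS; have := rel3 ha; omega
      · exfalso; subst hb; have := haS0 haS; subst ha; omega
    · have hmm : (i - 1).val % 4 = 2 := by have := hsub i; omega
      refine ⟨(i - 1, r1), ⟨Or.inr ⟨rfl, hmm⟩, memC hm2 r1 (Or.inr (by ring))⟩, ?_⟩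
      rintro ⟨a, b⟩ ⟨haS, hmem⟩
      rcases shape1 hmem with ⟨hb, ha | ha | ha⟩ | ⟨hb, ha⟩
      · exfalso; subst hb; have := haS1 haS; subst ha; omega
      · exfalso; subst hb; have := haS1 haS; have := rel2 ha; omega
      · rw [hb, show a = i - 1 by rw [ha]; ring]
      · exfalso; subst hb; have := haS0 haS; subst ha; omega

end construction2
end EDS5

theorem stmt5 (m n : ℕ) (hm : 3 ≤ m) (hn : 1 ≤ n) :
    (∃ S : Set (Fin m × Fin n), IsEffDomSet ((cycleGraph m).boxProd (pathGraph n)) S) ↔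
      (n = 1 ∧ m % 3 = 0) ∨ (n = 2 ∧ m % 4 = 0) := by
  haveI : NeZero m := ⟨by omega⟩
  constructor
  · rintro ⟨S, hS⟩
    rcases (show n = 1 ∨ n = 2 ∨ 3 ≤ n by omega) with h | h | h
    · subst h; exact Or.inl ⟨rfl, EDS5.forward1 hm hS⟩
    · subst h; exact Or.inr ⟨rfl, EDS5.forward2 hm hS⟩
    · exact (EDS5.no_three hm h hS).elim
  · rintro (⟨h1, h3⟩ | ⟨h2, h4⟩)
    · subst h1; exact ⟨_, EDS5.construct1 hm h3⟩
    · subst h2; exact ⟨_, EDS5.construct2 hm h4⟩
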